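/- (Lemma: lower bound for the tail ratio.) Under the standing assumptions and hypotheses (H1)–(H3), liminf_{x→∞} F̄(x)/B̄^r(x) ≥ ρ₁ f*(γ). -/

import Mathlib

open MeasureTheory Filter Topology

noncomputable section

/-- A tail function T = Ḡ is long-tailed if Ḡ(x − y)/Ḡ(x) → 1 as x → ∞ for every y > 0. -/
def LongTailedTail (T : ℝ → ℝ) : Prop :=
  ∀ y > (0:ℝ), Tendsto (fun x => T (x - y) / T x) atTop (𝓝 1)

/-- Smith's condition: Ḡ(x) = exp(−Λ(x)) with Λ(x) = ∫₀ˣ λ̃, λ̃ nonincreasing and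
tending to 0 at infinity, and limsup_{x→∞} Λ(2x)/Λ(x) < 2. -/
def SmithCondition (T : ℝ → ℝ) : Prop :=
  ∃ lam : ℝ → ℝ, Antitone lam ∧ Tendsto lam atTop (𝓝 0) ∧
    (∀ x : ℝ, T x = Real.exp (-(∫ u in (0:ℝ)..x, lam u))) ∧
    limsup (fun x => (∫ u in (0:ℝ)..(2 * x), lam u) / ∫ u in (0:ℝ)..x, lam u) atTop < 2

/-- lower bound for the tail ratio:
liminf_{x→∞} F̄(x)/B̄^r(x) ≥ ρ₁ f*(γ). -/
theorem tail_ratio_liminf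
    (F B V : StieltjesFunction ℝ)
    (hFneg : ∀ x < (0:ℝ), F x = 0) (hBneg : ∀ x < (0:ℝ), B x = 0)
    (hVneg : ∀ x < (0:ℝ), V x = 0)
    (hFtop : Tendsto (⇑F) atTop (𝓝 1)) (hBtop : Tendsto (⇑B) atTop (𝓝 1))
    (hVtop : Tendsto (⇑V) atTop (𝓝 1))
    (β ϑ lam lam2 γ ρ₁ ρ₂ fs : ℝ)
    (hBint : IntegrableOn (fun y => 1 - B y) (Set.Ioi 0))
    (hVint : IntegrableOn (fun y => 1 - V y) (Set.Ioi 0))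
    (hβ : β = ∫ y in Set.Ioi (0:ℝ), (1 - B y)) (hβpos : 0 < β)
    (hϑ : ϑ = ∫ y in Set.Ioi (0:ℝ), (1 - V y)) (hϑpos : 0 < ϑ)
    (hlam : 0 < lam) (hlam2 : 0 < lam2) (hγ : 0 < γ)
    (hρ₁ : ρ₁ = lam * β) (hρ₂ : ρ₂ = lam2 * ϑ) (hρ : ρ₁ + ρ₂ < 1)
    (hfs : fs = ∫ x in Set.Ici (0:ℝ), Real.exp (-γ * x) ∂F.measure) (hfspos : 0 < fs)
    (Fγ Br Vr : ℝ → ℝ)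
    (hFγ : ∀ x, Fγ x = (1 / fs) * ∫ u in Set.Icc (0:ℝ) x, Real.exp (-γ * u) ∂F.measure)
    (hBr : ∀ x, Br x = (1 / β) * ∫ y in (0:ℝ)..x, (1 - B y))
    (hVr : ∀ x, Vr x = (1 / ϑ) * ∫ y in (0:ℝ)..x, (1 - V y))
    (hFtailpos : ∀ x : ℝ, 0 ≤ x → 0 < 1 - F x)
    (hBrtailpos : ∀ x : ℝ, 0 ≤ x → 0 < 1 - Br x)
    (hEq1 : ∀ x : ℝ, 0 ≤ x →
       1 - F x = ρ₁ * fs * (1 - Fγ x) + ρ₂ * (1 - Vr x)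
         + ρ₁ * fs * ((1 / fs) *
             ∫ u in Set.Icc (0:ℝ) x, (1 - Br (x - u)) * Real.exp (-γ * u) ∂F.measure))
    (hEq2 : ∀ x : ℝ, 0 ≤ x →
       1 - F x = ρ₁ * fs * (1 - Br x) + ρ₂ * (1 - Vr x)
         + ρ₁ * fs * ((1 / β) * ∫ u in (0:ℝ)..x, (1 - Fγ (x - u)) * (1 - B u)))
    (H1 : Tendsto (fun x => (1 - Vr x) / (1 - Br x)) atTop (𝓝 0))
    (H2 : Tendsto (fun x => (1 - Vr x) / (1 - F x)) atTop (𝓝 0))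
    (H3 : ∃ M > (0:ℝ), ∀ x ≥ (0:ℝ), 1 - F x ≤ M * (1 - Br x))
    :
    ρ₁ * fs ≤ liminf (fun x => (1 - F x) / (1 - Br x)) atTop := by
  have hρ₁pos : 0 < ρ₁ := by rw [hρ₁]; positivity
  -- B ≤ 1
  have hBle : ∀ t, B t ≤ 1 := fun t => B.mono.ge_of_tendsto hBtop t
  -- F.measure is finite
  have hFbot : Tendsto (⇑F) atBot (𝓝 0) := by
    refine Tendsto.congr' ?_ tendsto_const_nhds
    filter_upwards [eventually_lt_atBot (0:ℝ)] with x hx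
    exact (hFneg x hx).symm
  have hfin : IsFiniteMeasure F.measure := by
    constructor
    rw [F.measure_univ hFbot hFtop]
    exact ENNReal.ofReal_lt_top
  -- exp(-γ x) integrable on Ici 0 wrt F.measure
  have hexp_int : IntegrableOn (fun x => Real.exp (-γ * x)) (Set.Ici 0) F.measure := by
    refine Measure.integrableOn_of_bounded (M := 1) (measure_ne_top _ _)
      (Real.continuous_exp.comp (continuous_const.mul continuous_id)).aestronglyMeasurable ?_
    refine (ae_restrict_iff' measurableSet_Ici).2 (ae_of_all _ fun x hx => ?_)
    rw [Real.norm_eq_abs, abs_of_pos (Real.exp_pos _)]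
    exact Real.exp_le_one_iff.2 (by nlinarith [Set.mem_Ici.1 hx])
  -- Fγ ≤ 1 on nonneg
  have hFγle : ∀ t : ℝ, 0 ≤ t → Fγ t ≤ 1 := by
    intro t ht
    rw [hFγ]
    have hmono : (∫ u in Set.Icc (0:ℝ) t, Real.exp (-γ * u) ∂F.measure)
        ≤ ∫ u in Set.Ici (0:ℝ), Real.exp (-γ * u) ∂F.measure := by
      refine setIntegral_mono_set hexp_int ?_ (ae_of_all _ Set.Icc_subset_Ici_self)
      exact ae_of_all _ fun x => (Real.exp_pos _).le
    rw [← hfs] at hmono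
    calc (1 / fs) * ∫ u in Set.Icc (0:ℝ) t, Real.exp (-γ * u) ∂F.measure
        ≤ (1 / fs) * fs := by
          apply mul_le_mul_of_nonneg_left hmono (by positivity)
      _ = 1 := by field_simp
  -- key lower bound for x ≥ 0
  have hkey : ∀ x : ℝ, 0 ≤ x →
      ρ₁ * fs * (1 - Br x) + ρ₂ * (1 - Vr x) ≤ 1 - F x := by
    intro x hx
    rw [hEq2 x hx]
    have hint : 0 ≤ ∫ u in (0:ℝ)..x, (1 - Fγ (x - u)) * (1 - B u) := by
      apply intervalIntegral.integral_nonneg hx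
      intro u hu
      have h1 : 0 ≤ 1 - Fγ (x - u) :=
        sub_nonneg.2 (hFγle (x - u) (by linarith [hu.2]))
      have h2 : 0 ≤ 1 - B u := sub_nonneg.2 (hBle u)
      exact mul_nonneg h1 h2
    have h3 : 0 ≤ ρ₁ * fs * (1 / β * ∫ u in (0:ℝ)..x, (1 - Fγ (x - u)) * (1 - B u)) := by
      apply mul_nonneg (by positivity)
      exact mul_nonneg (by positivity) hint
    linarith
  set g : ℝ → ℝ := fun x => ρ₁ * fs + ρ₂ * ((1 - Vr x) / (1 - Br x)) with hg_def
  have hg : Tendsto g atTop (𝓝 (ρ₁ * fs)) := by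
    have := tendsto_const_nhds (x := ρ₁ * fs) (f := atTop (α := ℝ)) |>.add
      (H1.const_mul ρ₂)
    simpa using this
  have hle : ∀ᶠ x in atTop, g x ≤ (1 - F x) / (1 - Br x) := by
    filter_upwards [eventually_ge_atTop (0:ℝ)] with x hx
    have hBrpos := hBrtailpos x hx
    rw [le_div_iff₀ hBrpos, hg_def]
    have : (ρ₁ * fs + ρ₂ * ((1 - Vr x) / (1 - Br x))) * (1 - Br x)
        = ρ₁ * fs * (1 - Br x) + ρ₂ * (1 - Vr x) := by
      field_simp
    rw [this]
    exact hkey x hx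
  have hu : IsBoundedUnder (· ≥ ·) atTop g := hg.isBoundedUnder_ge
  obtain ⟨M, hM, hMle⟩ := H3
  have hv : IsCoboundedUnder (· ≥ ·) atTop (fun x => (1 - F x) / (1 - Br x)) := by
    refine IsBoundedUnder.isCoboundedUnder_ge (isBoundedUnder_of_eventually_le (a := M) ?_)
    filter_upwards [eventually_ge_atTop (0:ℝ)] with x hx
    rw [div_le_iff₀ (hBrtailpos x hx)]
    exact hMle x hx
  calc ρ₁ * fs = liminf g atTop := (hg.liminf_eq).symm
    _ ≤ liminf (fun x => (1 - F x) / (1 - Br x)) atTop :=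
        liminf_le_liminf hle hu hv
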